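/- Let V be a centered Gaussian random variable with variance σ² > 0 and let R be an independent 1-Pareto random variable (P(R > r) = 1/r, r ≥ 1). Then P(R·exp(V − σ²/2) > 1) = 2·Ψ(σ/2), where Ψ is the standard normal survival function. -/

import Mathlib

open MeasureTheory ProbabilityTheory Real
open scoped ENNReal NNReal

lemma aux_tail {σ : ℝ} (hσ : 0 < σ) :
    gaussianReal 0 (Real.toNNReal (σ ^ 2)) (Set.Ioi (σ ^ 2 / 2))
      = ENNReal.ofReal (∫ y in Set.Ioi (σ / 2), (Real.sqrt (2 * Real.pi))⁻¹ * Real.exp (-y ^ 2 / 2)) := by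
  have key : gaussianReal 0 (Real.toNNReal (σ ^ 2)) = (gaussianReal 0 1).map (fun x => σ * x) := by
    rw [show (fun x => σ * x) = (σ * ·) from rfl, gaussianReal_map_const_mul, mul_zero]
    congr 1
    rw [← NNReal.coe_inj]
    simp [Real.coe_toNNReal _ (sq_nonneg σ)]
  rw [key, Measure.map_apply (by fun_prop) measurableSet_Ioi]
  have hpre : (fun x => σ * x) ⁻¹' Set.Ioi (σ ^ 2 / 2) = Set.Ioi (σ / 2) := by
    ext x
    simp only [Set.mem_preimage, Set.mem_Ioi]
    rw [pow_two]
    constructor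
    · intro h; nlinarith
    · intro h; nlinarith
  rw [hpre, gaussianReal_apply_eq_integral 0 one_ne_zero]
  congr 1
  refine setIntegral_congr_fun measurableSet_Ioi fun y _ => ?_
  simp [gaussianPDFReal, neg_div]


lemma aux_symm {σ : ℝ} (hσ : 0 < σ) :
    gaussianReal (σ ^ 2) (Real.toNNReal (σ ^ 2)) (Set.Iic (σ ^ 2 / 2))
      = gaussianReal 0 (Real.toNNReal (σ ^ 2)) (Set.Ioi (σ ^ 2 / 2)) := by
  set t := Real.toNNReal (σ ^ 2) with ht
  have ht0 : t ≠ 0 := by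
    simp [ht, Real.toNNReal_eq_zero, not_le]
    positivity
  have hshift : gaussianReal (σ ^ 2) t = (gaussianReal 0 t).map (· + σ ^ 2) := by
    rw [gaussianReal_map_add_const, zero_add]
  have hneg : gaussianReal 0 t = (gaussianReal 0 t).map ((-1 : ℝ) * ·) := by
    rw [gaussianReal_map_const_mul, mul_zero]
    congr 1
    rw [← NNReal.coe_inj]
    norm_num
  rw [hshift, Measure.map_apply (by fun_prop) measurableSet_Iic]
  have h1 : (· + σ ^ 2) ⁻¹' Set.Iic (σ ^ 2 / 2) = Set.Iic (-(σ ^ 2 / 2)) := by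
    ext x; simp only [Set.mem_preimage, Set.mem_Iic]; constructor <;> intro h <;> linarith
  rw [h1]
  conv_lhs => rw [hneg]
  rw [Measure.map_apply (by fun_prop) measurableSet_Iic]
  have h2 : ((-1 : ℝ) * ·) ⁻¹' Set.Iic (-(σ ^ 2 / 2)) = Set.Ici (σ ^ 2 / 2) := by
    ext x; simp only [Set.mem_preimage, Set.mem_Iic, Set.mem_Ici]; constructor <;> intro h <;> linarith
  rw [h2, ← Set.Ioi_union_left, measure_union (by simp) (measurableSet_singleton _),
    gaussianReal_absolutelyContinuous _ ht0 (volume_singleton), add_zero]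


lemma aux_pdf {σ : ℝ} (hσ : 0 < σ) (v : ℝ) :
    ENNReal.ofReal (Real.exp (v - σ ^ 2 / 2)) * gaussianPDF 0 (Real.toNNReal (σ ^ 2)) v
      = gaussianPDF (σ ^ 2) (Real.toNNReal (σ ^ 2)) v := by
  have ht : ((Real.toNNReal (σ ^ 2)) : ℝ) = σ ^ 2 := Real.coe_toNNReal _ (sq_nonneg σ)
  rw [gaussianPDF, gaussianPDF, ← ENNReal.ofReal_mul (Real.exp_nonneg _)]
  congr 1
  rw [gaussianPDFReal, gaussianPDFReal, ht, ← mul_assoc, mul_comm (Real.exp _), mul_assoc,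
    ← Real.exp_add]
  congr 2
  have hσ2 : (σ:ℝ)^2 ≠ 0 := by positivity
  field_simp
  ring

theorem stmt11 {Ω : Type*} [MeasurableSpace Ω] (μ : Measure Ω) [IsProbabilityMeasure μ]
    (σ : ℝ) (hσ : 0 < σ)
    (V R : Ω → ℝ) (hV : Measurable V) (hR : Measurable R)
    (hVlaw : Measure.map V μ = gaussianReal 0 (Real.toNNReal (σ ^ 2)))
    (hPareto : ∀ r : ℝ, 1 ≤ r → μ {ω | r < R ω} = ENNReal.ofReal (1 / r))
    (hindep : IndepFun V R μ)
    (Ψ : ℝ → ℝ)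
    (hΨ : ∀ u, Ψ u = ∫ y in Set.Ioi u, (Real.sqrt (2 * Real.pi))⁻¹ * Real.exp (-y ^ 2 / 2)) :
    μ {ω | 1 < R ω * Real.exp (V ω - σ ^ 2 / 2)} = ENNReal.ofReal (2 * Ψ (σ / 2)) := by
  have hc : (0:ℝ) < σ ^ 2 / 2 := by positivity
  set c : ℝ := σ ^ 2 / 2 with hcdef
  set t := Real.toNNReal (σ ^ 2) with htdef
  have ht0 : t ≠ 0 := by
    simp only [htdef, ne_eq, Real.toNNReal_eq_zero, not_le]
    positivity
  -- step 1: rewrite the event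
  have hev : {ω | 1 < R ω * Real.exp (V ω - c)}
      = (fun ω => (V ω, R ω)) ⁻¹' {p : ℝ × ℝ | Real.exp (c - p.1) < p.2} := by
    ext ω
    simp only [Set.mem_setOf_eq, Set.mem_preimage]
    have h1 : Real.exp (c - V ω) * Real.exp (V ω - c) = 1 := by
      rw [← Real.exp_add]; simp
    constructor <;> intro h <;>
      nlinarith [Real.exp_pos (V ω - c), Real.exp_pos (c - V ω)]
  have hSm : MeasurableSet {p : ℝ × ℝ | Real.exp (c - p.1) < p.2} :=
    measurableSet_lt (by fun_prop) measurable_snd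
  have hmap : μ.map (fun ω => (V ω, R ω)) = (μ.map V).prod (μ.map R) :=
    (indepFun_iff_map_prod_eq_prod_map_map hV.aemeasurable hR.aemeasurable).1 hindep
  haveI : IsProbabilityMeasure (μ.map R) := Measure.isProbabilityMeasure_map hR.aemeasurable
  rw [hev, ← Measure.map_apply (hV.prodMk hR) hSm, hmap, Measure.prod_apply hSm]
  -- step 2: compute the inner measure
  have hg : ∀ v : ℝ, (μ.map R) (Prod.mk v ⁻¹' {p : ℝ × ℝ | Real.exp (c - p.1) < p.2})
      = if v ≤ c then ENNReal.ofReal (Real.exp (v - c)) else 1 := by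
    intro v
    have hpre : Prod.mk v ⁻¹' {p : ℝ × ℝ | Real.exp (c - p.1) < p.2}
        = Set.Ioi (Real.exp (c - v)) := rfl
    rw [hpre, Measure.map_apply hR measurableSet_Ioi]
    by_cases hvc : v ≤ c
    · rw [if_pos hvc]
      have h1 : (1:ℝ) ≤ Real.exp (c - v) := Real.one_le_exp (by linarith)
      have h2 : R ⁻¹' Set.Ioi (Real.exp (c - v)) = {ω | Real.exp (c - v) < R ω} := rfl
      rw [h2, hPareto _ h1, one_div, ← Real.exp_neg, neg_sub]
    · rw [if_neg hvc]
      refine le_antisymm prob_le_one ?_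
      have h1 : μ {ω | (1:ℝ) < R ω} = 1 := by rw [hPareto 1 le_rfl]; simp
      calc (1:ℝ≥0∞) = μ {ω | (1:ℝ) < R ω} := h1.symm
        _ = μ (R ⁻¹' Set.Ioi 1) := rfl
        _ ≤ μ (R ⁻¹' Set.Ioi (Real.exp (c - v))) := by
            refine measure_mono (Set.preimage_mono (Set.Ioi_subset_Ioi ?_))
            exact Real.exp_le_one_iff.2 (by linarith)
  rw [lintegral_congr hg, hVlaw,
    ← lintegral_add_compl (μ := gaussianReal 0 t) _ (measurableSet_Iic (a := c))]
  have hIic : ∫⁻ v in Set.Iic c, (if v ≤ c then ENNReal.ofReal (Real.exp (v - c)) else 1)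
        ∂(gaussianReal 0 t)
      = gaussianReal 0 t (Set.Ioi c) := by
    rw [setLIntegral_congr_fun measurableSet_Iic
      (fun v (hv : v ∈ Set.Iic c) => if_pos (show v ≤ c from hv))]
    rw [gaussianReal_of_var_ne_zero _ ht0,
      setLIntegral_withDensity_eq_setLIntegral_mul _ (measurable_gaussianPDF _ _)
        (by fun_prop) measurableSet_Iic]
    calc ∫⁻ v in Set.Iic c, (gaussianPDF 0 t * fun v => ENNReal.ofReal (Real.exp (v - c))) v
        = ∫⁻ v in Set.Iic c, gaussianPDF (σ ^ 2) t v := by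
          refine setLIntegral_congr_fun measurableSet_Iic
            (fun v _ => ?_)
          rw [Pi.mul_apply, mul_comm]
          exact aux_pdf hσ v
      _ = gaussianReal (σ ^ 2) t (Set.Iic c) := (gaussianReal_apply _ ht0 _).symm
      _ = gaussianReal 0 t (Set.Ioi c) := aux_symm hσ
      _ = (volume.withDensity (gaussianPDF 0 t)) (Set.Ioi c) := by
          rw [gaussianReal_of_var_ne_zero _ ht0]
  have hIoi : ∫⁻ v in (Set.Iic c)ᶜ, (if v ≤ c then ENNReal.ofReal (Real.exp (v - c)) else 1)
        ∂(gaussianReal 0 t)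
      = gaussianReal 0 t (Set.Ioi c) := by
    rw [Set.compl_Iic,
      setLIntegral_congr_fun measurableSet_Ioi
        (fun v (hv : v ∈ Set.Ioi c) => if_neg (not_le.2 (show c < v from hv))),
      setLIntegral_one]
  rw [hIic, hIoi, aux_tail hσ, ← hΨ (σ / 2)]
  have hΨnn : 0 ≤ Ψ (σ / 2) := by
    rw [hΨ]
    exact integral_nonneg fun y => by positivity
  rw [two_mul, ENNReal.ofReal_add hΨnn hΨnn]
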